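/- Let X be a nonnegative random variable on a probability space (Ω, 𝓕, P), let ν be a measure on a measurable space S and f : S → [0,∞) measurable, and suppose that for every λ > 0 one has ∫_S (1 − exp(−λ f(s))) ν(ds) < ∞ and E[exp(−λX)] = exp(−∫_S (1 − exp(−λ f(s))) ν(ds)). Then P(X = 0) = 0 if and only if ν({s ∈ S : f(s) > 0}) = ∞. -/

import Mathlib

open MeasureTheory Filter

/-- Let `X` be a nonnegative random variable on a probability space `(Ω, 𝓕, P)`, let `ν` be a
measure on a measurable space `S` and `f : S → [0,∞)` measurable, and suppose that for every
`λ > 0` one has `∫_S (1 − exp(−λ f s)) ν(ds) < ∞` and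
`E[exp(−λX)] = exp(−∫_S (1 − exp(−λ f s)) ν(ds))`. Then `P(X = 0) = 0` if and only if
`ν {s | f s > 0} = ∞`. -/
theorem prob_eq_zero_iff_levy_measure_infinite
    {Ω S : Type*} [MeasurableSpace Ω] [MeasurableSpace S]
    (P : Measure Ω) [IsProbabilityMeasure P]
    (X : Ω → ℝ) (hX : Measurable X) (hX0 : ∀ᵐ ω ∂P, 0 ≤ X ω)
    (ν : Measure S) (f : S → ℝ) (hf : Measurable f) (hf0 : ∀ s, 0 ≤ f s)
    (hfin : ∀ lam : ℝ, 0 < lam →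
      (∫⁻ s, ENNReal.ofReal (1 - Real.exp (-lam * f s)) ∂ν) < ⊤)
    (hLK : ∀ lam : ℝ, 0 < lam →
      ∫ ω, Real.exp (-lam * X ω) ∂P =
        Real.exp (-(∫⁻ s, ENNReal.ofReal (1 - Real.exp (-lam * f s)) ∂ν).toReal)) :
    P {ω | X ω = 0} = 0 ↔ ν {s | 0 < f s} = ⊤ := by
  set J : ℕ → ENNReal := fun n =>
    ∫⁻ s, ENNReal.ofReal (1 - Real.exp (-((n : ℝ) + 1) * f s)) ∂ν with hJ
  have hpos : ∀ n : ℕ, (0 : ℝ) < (n : ℝ) + 1 := fun n => by positivity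
  have hmeasX : MeasurableSet {ω | X ω = 0} := hX (measurableSet_singleton 0)
  have hmeasf : MeasurableSet {s | 0 < f s} := measurableSet_lt measurable_const hf
  have hmono_pt : ∀ c : ℝ, 0 ≤ c → Monotone (fun n : ℕ =>
      ENNReal.ofReal (1 - Real.exp (-((n : ℝ) + 1) * c))) := by
    intro c hc n m hnm
    apply ENNReal.ofReal_le_ofReal
    have h1 : -((m : ℝ) + 1) * c ≤ -((n : ℝ) + 1) * c := by
      apply mul_le_mul_of_nonneg_right _ hc
      have : (n : ℝ) ≤ m := Nat.cast_le.mpr hnm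
      linarith
    have := Real.exp_le_exp.mpr h1
    linarith
  have hJmono : Monotone J := fun n m hnm =>
    lintegral_mono fun s => hmono_pt (f s) (hf0 s) hnm
  -- pointwise iSup equals the indicator of {f > 0}
  have hptsup : ∀ s, (⨆ n : ℕ, ENNReal.ofReal (1 - Real.exp (-((n : ℝ) + 1) * f s)))
      = ({s | 0 < f s} : Set S).indicator 1 s := by
    intro s
    rcases eq_or_lt_of_le (hf0 s) with h | h
    · simp [Set.indicator, ← h]
    · have hlim : Tendsto (fun n : ℕ =>
          ENNReal.ofReal (1 - Real.exp (-((n : ℝ) + 1) * f s))) atTop (nhds 1) := by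
        have h2 : Tendsto (fun n : ℕ => -((n : ℝ) + 1) * f s) atTop atBot := by
          apply Tendsto.atBot_mul_const h
          exact tendsto_neg_atTop_atBot.comp
            (tendsto_atTop_add_const_right _ _ tendsto_natCast_atTop_atTop)
        have h3 := (Real.tendsto_exp_atBot).comp h2
        have h4 : Tendsto (fun n : ℕ => 1 - Real.exp (-((n : ℝ) + 1) * f s))
            atTop (nhds 1) := by simpa using (tendsto_const_nhds (x := (1:ℝ))).sub h3
        have := (ENNReal.continuous_ofReal.tendsto 1).comp h4
        simpa [Function.comp_def] using this
      have hmt := tendsto_atTop_iSup (fun n m hnm => hmono_pt (f s) (hf0 s) hnm)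
      rw [tendsto_nhds_unique hmt hlim]
      simp [Set.indicator, h]
  have hiSupJ : (⨆ n, J n) = ν {s | 0 < f s} := by
    rw [hJ, ← lintegral_iSup
      (fun n => show Measurable (fun s => ENNReal.ofReal (1 - Real.exp (-((n : ℝ) + 1) * f s))) from
        (measurable_const.sub ((hf.const_mul _).exp)).ennreal_ofReal)
      (fun n m hnm s => hmono_pt (f s) (hf0 s) hnm)]
    rw [lintegral_congr hptsup, lintegral_indicator_one hmeasf]
  -- DCT: E[exp(-(n+1) X)] → P(X = 0)
  have hDCT : Tendsto (fun n : ℕ => ∫ ω, Real.exp (-((n : ℝ) + 1) * X ω) ∂P)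
      atTop (nhds ((P {ω | X ω = 0}).toReal)) := by
    have := tendsto_integral_of_dominated_convergence (μ := P)
      (F := fun n ω => Real.exp (-((n : ℝ) + 1) * X ω))
      (f := fun ω => ({ω | X ω = 0} : Set Ω).indicator 1 ω)
      (bound := fun _ => 1)
      (fun n => ((hX.const_mul _).exp).aestronglyMeasurable)
      (integrable_const 1)
      (fun n => by
        filter_upwards [hX0] with ω hω
        rw [Real.norm_eq_abs, abs_of_pos (Real.exp_pos _)]
        have : -((n : ℝ) + 1) * X ω ≤ 0 := by nlinarith [hpos n]
        calc Real.exp (-((n : ℝ) + 1) * X ω) ≤ Real.exp 0 := Real.exp_le_exp.mpr this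
          _ = 1 := Real.exp_zero)
      (by
        filter_upwards [hX0] with ω hω
        rcases eq_or_lt_of_le hω with h | h
        · have h1 : ∀ n : ℕ, Real.exp (-((n : ℝ) + 1) * X ω) = 1 := by
            intro n; rw [← h]; simp
          have hmem : ω ∈ {ω | X ω = 0} := by simp [← h]
          simp only [funext h1, Set.indicator_of_mem hmem, Pi.one_apply]
          exact tendsto_const_nhds
        · have h2 : Tendsto (fun n : ℕ => -((n : ℝ) + 1) * X ω) atTop atBot := by
            apply Tendsto.atBot_mul_const h
            exact tendsto_neg_atTop_atBot.comp
              (tendsto_atTop_add_const_right _ _ tendsto_natCast_atTop_atTop)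
          have h3 := (Real.tendsto_exp_atBot).comp h2
          have hmem : ω ∉ {ω | X ω = 0} := by simp [ne_of_gt h]
          simp only [Set.indicator_of_notMem hmem]
          exact h3)
    rwa [integral_indicator_one hmeasX] at this
  -- rewrite using hLK
  have hDCT2 : Tendsto (fun n : ℕ => Real.exp (-(J n).toReal))
      atTop (nhds ((P {ω | X ω = 0}).toReal)) := by
    have : (fun n : ℕ => Real.exp (-(J n).toReal))
        = fun n : ℕ => ∫ ω, Real.exp (-((n : ℝ) + 1) * X ω) ∂P := by
      funext n; rw [hLK _ (hpos n)]
    rw [this]; exact hDCT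
  constructor
  · -- P(X=0)=0 → ν{f>0}=⊤ : contrapose
    intro hP
    by_contra hne
    have hC : ν {s | 0 < f s} < ⊤ := lt_top_iff_ne_top.mpr hne
    have hJle : ∀ n, J n ≤ ν {s | 0 < f s} := fun n => hiSupJ ▸ le_iSup J n
    have hbound : ∀ n, Real.exp (-(ν {s | 0 < f s}).toReal) ≤ Real.exp (-(J n).toReal) := by
      intro n
      apply Real.exp_le_exp.mpr
      apply neg_le_neg
      exact ENNReal.toReal_mono hne (hJle n)
    have := le_of_tendsto_of_tendsto' tendsto_const_nhds hDCT2 hbound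
    rw [hP] at this
    simp at this
    exact absurd this (not_le.mpr (Real.exp_pos _))
  · intro hν
    have hJtop : (⨆ n, J n) = ⊤ := hiSupJ.trans hν
    have htoReal : Tendsto (fun n => (J n).toReal) atTop atTop := by
      rw [tendsto_atTop]
      intro M
      rcases (lt_iSup_iff.mp (by rw [hJtop]; exact ENNReal.ofReal_lt_top (r := M))) with ⟨N, hN⟩
      refine eventually_atTop.mpr ⟨N, fun n hn => ?_⟩
      have h1 : ENNReal.ofReal M ≤ J n := hN.le.trans (hJmono hn)
      have h2 := ENNReal.toReal_mono (hfin _ (hpos n)).ne h1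
      rcases le_or_gt 0 M with hM | hM
      · calc M = (ENNReal.ofReal M).toReal := (ENNReal.toReal_ofReal hM).symm
          _ ≤ (J n).toReal := h2
      · exact hM.le.trans ENNReal.toReal_nonneg
    have hexp : Tendsto (fun n : ℕ => Real.exp (-(J n).toReal)) atTop (nhds 0) :=
      Real.tendsto_exp_atBot.comp (tendsto_neg_atTop_atBot.comp htoReal)
    have h0 : (P {ω | X ω = 0}).toReal = 0 := tendsto_nhds_unique hDCT2 hexp
    exact (ENNReal.toReal_eq_zero_iff _).mp h0 |>.resolve_right (measure_ne_top P _)
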